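/- Let f(z,w) = (p(z), q(z,w)) with p(z) = z^δ and q(z,w) = z^γ w^d(1 + η(z,w)), where |η| < ε on U_r = {|z| < r|w|^{l}, 0 < |w| < r} for l = l_2^{-1} ≥ 0, and assume δ ≥ l γ + d and d ≥ 2. Then for all sufficiently small r > 0, f(U_r) ⊆ U_r. -/

import Mathlib

lemma stmt5_aux (δ d γ : ℕ) (hd : 2 ≤ d)
    (l : ℝ) (hl : 0 ≤ l) (hld : l * γ + d ≤ (δ : ℝ))
    (ε : ℝ) (hε : 0 < ε) (hε1 : ε < 1)
    (r : ℝ) (hr : 0 < r) (hr4 : r ≤ 1/4) (hrεl : r ≤ (1 - ε) ^ l / 2)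
    (a b c : ℝ) (hz : 0 < a) (hw : 0 < b)
    (hzw : a < r * b ^ l) (hwr : b < r)
    (hc1 : 1 - ε ≤ c) (hc2 : c ≤ 2) :
    a ^ δ < r * (a ^ γ * b ^ d * c) ^ l ∧ a ^ γ * b ^ d * c < r := by
  have hεl : 0 < (1 - ε) ^ l := Real.rpow_pos_of_pos (by linarith) l
  have hcpos : 0 < c := by linarith
  have hb1 : b ≤ 1 := by linarith
  have hbl1 : b ^ l ≤ 1 := Real.rpow_le_one (le_of_lt hw) hb1 hl
  have ha1 : a < 1 := by nlinarith
  constructor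
  · have hδr : a ^ δ = a ^ ((δ : ℝ)) := (Real.rpow_natCast a δ).symm
    set s : ℝ := (δ : ℝ) - l * γ with hs_def
    have hd2 : (2 : ℝ) ≤ (d : ℝ) := by exact_mod_cast hd
    have hds : (d : ℝ) ≤ s := by simp only [hs_def]; linarith
    have hs2 : 2 ≤ s := by linarith
    have key : a ^ ((δ : ℝ)) = a ^ (l * γ) * a ^ s := by
      rw [← Real.rpow_add hz, hs_def]; ring_nf
    have step1 : a ^ s < (r * b ^ l) ^ s :=
      Real.rpow_lt_rpow (le_of_lt hz) hzw (by linarith)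
    have step2 : (r * b ^ l) ^ s = r ^ s * b ^ (l * s) := by
      rw [Real.mul_rpow (le_of_lt hr) (Real.rpow_nonneg (le_of_lt hw) l),
        ← Real.rpow_mul (le_of_lt hw)]
    have step3 : b ^ (l * s) ≤ b ^ (l * d) :=
      Real.rpow_le_rpow_of_exponent_ge hw hb1 (mul_le_mul_of_nonneg_left hds hl)
    have step4 : r ^ s ≤ r * r := by
      have h1 : r ^ s = r * r ^ (s - 1) := by
        nth_rewrite 1 [show s = 1 + (s - 1) by ring]
        rw [Real.rpow_add hr, Real.rpow_one]
      have h2 : r ^ (s - 1) ≤ r := by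
        have := Real.rpow_le_rpow_of_exponent_ge hr (by linarith : r ≤ 1)
          (by linarith : (1 : ℝ) ≤ s - 1)
        simpa using this
      rw [h1]
      exact mul_le_mul_of_nonneg_left h2 (le_of_lt hr)
    have step5 : r * r < r * (1 - ε) ^ l := by nlinarith
    have chain : a ^ ((δ : ℝ)) < a ^ (l * γ) * (r * (1 - ε) ^ l * b ^ (l * d)) := by
      rw [key]
      have hpos : 0 < a ^ (l * (γ : ℝ)) := Real.rpow_pos_of_pos hz _
      have h6 : a ^ s < r * (1 - ε) ^ l * b ^ (l * d) := by
        calc a ^ s < r ^ s * b ^ (l * s) := by rw [← step2]; exact step1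
          _ ≤ (r * r) * b ^ (l * s) :=
              mul_le_mul_of_nonneg_right step4 (Real.rpow_nonneg (le_of_lt hw) _)
          _ ≤ (r * r) * b ^ (l * d) :=
              mul_le_mul_of_nonneg_left step3 (by positivity)
          _ < r * (1 - ε) ^ l * b ^ (l * d) :=
              mul_lt_mul_of_pos_right step5 (Real.rpow_pos_of_pos hw _)
      exact (mul_lt_mul_iff_right₀ hpos).mpr h6
    have hbase : ((1 - ε) * a ^ γ * b ^ d) ^ l =
        (1 - ε) ^ l * a ^ (l * γ) * b ^ (l * d) := by
      rw [Real.mul_rpow (mul_nonneg (by linarith) (pow_nonneg (le_of_lt hz) γ))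
          (pow_nonneg (le_of_lt hw) d),
        Real.mul_rpow (by linarith) (pow_nonneg (le_of_lt hz) γ),
        ← Real.rpow_natCast a γ, ← Real.rpow_natCast b d,
        ← Real.rpow_mul (le_of_lt hz), ← Real.rpow_mul (le_of_lt hw),
        mul_comm (γ : ℝ) l, mul_comm (d : ℝ) l]
    have hmono : ((1 - ε) * a ^ γ * b ^ d) ^ l ≤ (a ^ γ * b ^ d * c) ^ l := by
      apply Real.rpow_le_rpow
        (mul_nonneg (mul_nonneg (by linarith) (pow_nonneg (le_of_lt hz) γ))
          (pow_nonneg (le_of_lt hw) d)) _ hl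
      have h := mul_le_mul_of_nonneg_right hc1
        (mul_nonneg (pow_nonneg (le_of_lt hz) γ) (pow_nonneg (le_of_lt hw) d))
      calc (1 - ε) * a ^ γ * b ^ d = (1 - ε) * (a ^ γ * b ^ d) := by ring
        _ ≤ c * (a ^ γ * b ^ d) := h
        _ = a ^ γ * b ^ d * c := by ring
    calc a ^ δ = a ^ ((δ : ℝ)) := hδr
      _ < a ^ (l * γ) * (r * (1 - ε) ^ l * b ^ (l * d)) := chain
      _ = r * ((1 - ε) ^ l * a ^ (l * γ) * b ^ (l * d)) := by ring
      _ = r * ((1 - ε) * a ^ γ * b ^ d) ^ l := by rw [hbase]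
      _ ≤ r * (a ^ γ * b ^ d * c) ^ l :=
          mul_le_mul_of_nonneg_left hmono (le_of_lt hr)
  · have hag : a ^ γ ≤ 1 := pow_le_one₀ (le_of_lt hz) (le_of_lt ha1)
    have hbd : b ^ d ≤ b ^ 2 := pow_le_pow_of_le_one (le_of_lt hw) hb1 hd
    calc a ^ γ * b ^ d * c ≤ 1 * b ^ 2 * 2 := by
          apply mul_le_mul (mul_le_mul hag hbd (by positivity) (by norm_num)) hc2
            (le_of_lt hcpos) (by positivity)
      _ < r := by
          nlinarith [mul_pos hw (sub_pos.mpr hwr),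
            mul_pos hr (by linarith : (0:ℝ) < 1/4 - b)]

/-- invariance of U_r, Case 3: for f(z,w) = (z^δ, z^γ w^d (1 + η(z,w)))
with |η| < ε on U_{r₁} = {0 < |z| < r₁|w|^l, 0 < |w| < r₁}, where l = l₂⁻¹ ≥ 0,
δ ≥ l·γ + d and d ≥ 2, one has f(U_r) ⊆ U_r for all sufficiently small r > 0. -/
theorem stmt5
    (δ d γ : ℕ) (hδ : 2 ≤ δ) (hd : 2 ≤ d)
    (l : ℝ) (hl : 0 ≤ l) (hld : l * γ + d ≤ (δ : ℝ))
    (ε : ℝ) (hε : 0 < ε) (hε1 : ε < 1)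
    (η : ℂ → ℂ → ℂ) (r1 : ℝ) (hr1 : 0 < r1)
    (hη : ∀ z w : ℂ, 0 < ‖z‖ → ‖z‖ < r1 * ‖w‖ ^ l → 0 < ‖w‖ → ‖w‖ < r1 → ‖η z w‖ < ε) :
    ∃ r0, 0 < r0 ∧ r0 ≤ r1 ∧ ∀ r, 0 < r → r ≤ r0 → ∀ z w : ℂ,
      0 < ‖z‖ → ‖z‖ < r * ‖w‖ ^ l → 0 < ‖w‖ → ‖w‖ < r →
      (0 < ‖z ^ δ‖ ∧ ‖z ^ δ‖ < r * ‖z ^ γ * w ^ d * (1 + η z w)‖ ^ l ∧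
        0 < ‖z ^ γ * w ^ d * (1 + η z w)‖ ∧ ‖z ^ γ * w ^ d * (1 + η z w)‖ < r) := by
  have hεl : 0 < (1 - ε) ^ l := Real.rpow_pos_of_pos (by linarith) l
  refine ⟨min r1 (min (1/4) ((1 - ε) ^ l / 2)), by positivity, min_le_left _ _, ?_⟩
  intro r hr hr0 z w hz hzw hw hwr
  have hrr1 : r ≤ r1 := hr0.trans (min_le_left _ _)
  have hr4 : r ≤ 1/4 := hr0.trans ((min_le_right _ _).trans (min_le_left _ _))
  have hrεl : r ≤ (1 - ε) ^ l / 2 := hr0.trans ((min_le_right _ _).trans (min_le_right _ _))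
  have hη' : ‖η z w‖ < ε := by
    refine hη z w hz (lt_of_lt_of_le hzw ?_) hw (lt_of_lt_of_le hwr hrr1)
    exact mul_le_mul_of_nonneg_right hrr1 (Real.rpow_nonneg (le_of_lt hw) l)
  have hc1 : 1 - ε ≤ ‖1 + η z w‖ := by
    have h1 : ‖(1 : ℂ)‖ ≤ ‖1 + η z w‖ + ‖η z w‖ := by
      calc ‖(1:ℂ)‖ = ‖(1 + η z w) + (-(η z w))‖ := by ring_nf
        _ ≤ ‖1 + η z w‖ + ‖-(η z w)‖ := norm_add_le _ _
        _ = ‖1 + η z w‖ + ‖η z w‖ := by rw [norm_neg]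
    simp only [norm_one] at h1
    linarith
  have hc2 : ‖1 + η z w‖ ≤ 2 := by
    have := norm_add_le (1 : ℂ) (η z w)
    simp only [norm_one] at this
    linarith
  have hQeq : ‖z ^ γ * w ^ d * (1 + η z w)‖ = ‖z‖ ^ γ * ‖w‖ ^ d * ‖1 + η z w‖ := by
    rw [norm_mul, norm_mul, norm_pow, norm_pow]
  obtain ⟨h1, h2⟩ := stmt5_aux δ d γ hd l hl hld ε hε hε1 r hr hr4 hrεl
    ‖z‖ ‖w‖ ‖1 + η z w‖ hz hw hzw hwr hc1 hc2
  refine ⟨by simpa [norm_pow] using pow_pos hz δ, ?_, ?_, ?_⟩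
  · rw [hQeq, norm_pow]; exact h1
  · rw [hQeq]
    exact mul_pos (mul_pos (pow_pos hz γ) (pow_pos hw d)) (by linarith)
  · rw [hQeq]; exact h2
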